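/- Let G be a block graph with block tree T(G), and let β = (v_1,...,v_n) be the reverse of a BFS ordering of T(G). If v_i v_j ∈ E(G) with j ≥ i, then N_i[v_i] ⊆ N_i[v_j], where N_i[v_k] = {v_k} ∪ {v_l : v_k v_l ∈ E(G), l ≥ i}. -/

import Mathlib

open SimpleGraph

/-- A graph is a block graph iff the vertices of every cycle form a clique
(equivalently, every block is a clique). -/
def IsBlockGraph {V : Type*} (G : SimpleGraph V) : Prop :=
  ∀ (u : V) (c : G.Walk u u), c.IsCycle → G.IsClique {v | v ∈ c.support}

/-- A block of a block graph, i.e. a maximal clique. -/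
def IsBlock {V : Type*} (G : SimpleGraph V) (B : Set V) : Prop :=
  G.IsClique B ∧ ∀ C : Set V, G.IsClique C → B ⊆ C → B = C

lemma exists_upwalk {n : ℕ} (G : SimpleGraph (Fin (n + 1)))
    (F : Fin (n + 1) → Fin (n + 1))
    (hF : ∀ u, u ≠ Fin.last n → G.Adj u (F u))
    (hparent : ∀ u, u ≠ Fin.last n → u < F u) :
    ∀ u : Fin (n + 1), ∃ p : G.Walk u (Fin.last n), ∀ v ∈ p.support, u ≤ v := by
  suffices h : ∀ m : ℕ, ∀ u : Fin (n + 1), n - u.val ≤ m →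
      ∃ p : G.Walk u (Fin.last n), ∀ v ∈ p.support, u ≤ v by
    exact fun u => h n u (Nat.sub_le _ _)
  intro m
  induction m with
  | zero =>
    intro u hu
    have : u = Fin.last n := by
      have := Nat.le_of_sub_eq_zero (Nat.le_zero.mp hu)
      exact Fin.ext (le_antisymm (Fin.le_last u) this)
    subst this
    exact ⟨SimpleGraph.Walk.nil, by simp⟩
  | succ m ih =>
    intro u hu
    by_cases h : u = Fin.last n
    · subst h; exact ⟨SimpleGraph.Walk.nil, by simp⟩
    · have hlt := hparent u h
      have hlt' : u.val < (F u).val := hlt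
      obtain ⟨p, hp⟩ := ih (F u) (by omega)
      refine ⟨SimpleGraph.Walk.cons (hF u h) p, ?_⟩
      intro v hv
      rw [SimpleGraph.Walk.support_cons, List.mem_cons] at hv
      rcases hv with rfl | hv
      · exact le_refl v
      · exact le_of_lt (lt_of_lt_of_le hlt (hp v hv))


/-- With `G` a block graph on `Fin (n+1)` and `(v_1, …, v_n)` the reverse
of a BFS ordering of the block tree `T(G)` (built from `F` as in the paper), if
`v_i v_j ∈ E(G)` with `i ≤ j` then `N_i[v_i] ⊆ N_i[v_j]`, where
`N_i[v_k] = {v_k} ∪ {v_l : v_k v_l ∈ E(G), l ≥ i}`. -/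
theorem closedUpNeighborhood_subset {n : ℕ} (G : SimpleGraph (Fin (n + 1)))
    (hconn : G.Connected) (hBG : IsBlockGraph G)
    (F : Fin (n + 1) → Fin (n + 1))
    (hFroot : F (Fin.last n) = Fin.last n)
    (hF : ∀ u, u ≠ Fin.last n → G.Adj u (F u) ∧ ∀ w, G.Adj u w → w ≤ F u)
    (hparent : ∀ u, u ≠ Fin.last n → u < F u)
    (hlevel : ∀ u v : Fin (n + 1), u ≤ v →
      (SimpleGraph.fromRel fun a b => F a = b).dist (Fin.last n) v ≤
        (SimpleGraph.fromRel fun a b => F a = b).dist (Fin.last n) u) :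
    ∀ i j : Fin (n + 1), i ≤ j → G.Adj i j →
      ({i} ∪ {l | G.Adj i l ∧ i ≤ l} : Set (Fin (n + 1))) ⊆
        {j} ∪ {l | G.Adj j l ∧ i ≤ l} := by
  intro i j hij hadj x hx
  rcases hx with rfl | ⟨hxadj, hix⟩
  · exact Or.inr ⟨hadj.symm, le_refl _⟩
  · by_cases hxj : x = j
    · exact Or.inl hxj
    · refine Or.inr ⟨?_, hix⟩
      have hiltj : i < j := lt_of_le_of_ne hij hadj.ne
      have hiltx : i < x := lt_of_le_of_ne hix hxadj.ne
      obtain ⟨pj, hpj⟩ := exists_upwalk G F (fun u hu => (hF u hu).1) hparent j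
      obtain ⟨px, hpx⟩ := exists_upwalk G F (fun u hu => (hF u hu).1) hparent x
      have hiw : i ∉ (pj.append px.reverse).support := by
        intro h
        rw [SimpleGraph.Walk.mem_support_append_iff] at h
        rcases h with h | h
        · exact absurd (hpj i h) (not_le.mpr hiltj)
        · rw [SimpleGraph.Walk.support_reverse, List.mem_reverse] at h
          exact absurd (hpx i h) (not_le.mpr hiltx)
      set P : G.Walk j x := (pj.append px.reverse).toPath.1 with hP
      have hPp : P.IsPath := SimpleGraph.Walk.IsPath.mk' (by
        exact (SimpleGraph.Walk.toPath (pj.append px.reverse)).2.support_nodup)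
      have hiP : i ∉ P.support := fun h =>
        hiw (SimpleGraph.Walk.support_toPath_subset _ h)
      -- cycle i → j → … → x → i
      have hq : (P.append (SimpleGraph.Walk.cons hxadj.symm SimpleGraph.Walk.nil)).IsPath := by
        rw [SimpleGraph.Walk.isPath_def, SimpleGraph.Walk.support_append]
        simp only [SimpleGraph.Walk.support_cons, SimpleGraph.Walk.support_nil, List.tail_cons]
        rw [List.nodup_append]
        exact ⟨hPp.support_nodup, List.nodup_singleton i,
          by intro a ha b hb hab; simp only [List.mem_singleton] at hb; rw [hab, hb] at ha; exact hiP ha⟩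
      have hce : s(i, j) ∉ (P.append (SimpleGraph.Walk.cons hxadj.symm SimpleGraph.Walk.nil)).edges := by
        rw [SimpleGraph.Walk.edges_append]
        simp only [SimpleGraph.Walk.edges_cons, SimpleGraph.Walk.edges_nil, List.mem_append,
          List.mem_cons, List.not_mem_nil, or_false]
        rintro (h | h)
        · exact hiP (SimpleGraph.Walk.fst_mem_support_of_mem_edges P h)
        · rw [Sym2.eq_iff] at h
          rcases h with ⟨h1, h2⟩ | ⟨h1, h2⟩
          · exact hxadj.ne h1
          · exact hxj h2.symm
      have hc : (SimpleGraph.Walk.cons hadj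
          (P.append (SimpleGraph.Walk.cons hxadj.symm SimpleGraph.Walk.nil))).IsCycle :=
        SimpleGraph.Walk.cons_isCycle_iff _ _ |>.mpr ⟨hq, hce⟩
      have hclique := hBG i _ hc
      have hjmem : j ∈ {v | v ∈ (SimpleGraph.Walk.cons hadj
          (P.append (SimpleGraph.Walk.cons hxadj.symm SimpleGraph.Walk.nil))).support} := by
        simp [SimpleGraph.Walk.support_cons, SimpleGraph.Walk.support_append]
      have hxmem : x ∈ {v | v ∈ (SimpleGraph.Walk.cons hadj
          (P.append (SimpleGraph.Walk.cons hxadj.symm SimpleGraph.Walk.nil))).support} := by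
        simp [SimpleGraph.Walk.support_cons, SimpleGraph.Walk.mem_support_append_iff]
      exact hclique hjmem hxmem (fun h => hxj h.symm)
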